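/- There exists a universal constant C > 0 such that the following holds for every integer m ≥ 1. Let p₁, …, p_m be independent random points, each uniformly distributed on the unit square [0,1]² ⊆ ℝ² (with the Euclidean metric), and let S = {p₁, …, p_m}. Let □ ⊆ [0,1]² be any axis-parallel square of side length 1/√m. Then the expected number of indices i ∈ {1, …, m} such that the Voronoi cell of p_i with respect to S intersects □ is at most C. -/

import Mathlib

open MeasureTheory ProbabilityTheory
open scoped ENNReal NNReal

noncomputable section

/-- The unit square `[0,1]² ⊆ ℝ²` (with the Euclidean metric). -/
def unitSquare : Set (EuclideanSpace ℝ (Fin 2)) := {x | ∀ i, x i ∈ Set.Icc (0 : ℝ) 1}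

/-- The axis-parallel square with south-west corner `c` and side length `s`. -/
def axisSquare (c : EuclideanSpace ℝ (Fin 2)) (s : ℝ) : Set (EuclideanSpace ℝ (Fin 2)) :=
  {x | ∀ i, x i ∈ Set.Icc (c i) (c i + s)}

/-- The Voronoi cell of `p` with respect to the finite set of sites `P`
in a metric space. -/
def vorCell {X : Type*} [MetricSpace X] (P : Finset X) (p : X) : Set X :=
  {x | ∀ q ∈ P, dist x p ≤ dist x q}

/-! ### Auxiliary geometric measure lemmas -/

lemma volume_box (a b : Fin 2 → ℝ) :
    volume {x : EuclideanSpace ℝ (Fin 2) | ∀ i, x i ∈ Set.Icc (a i) (b i)}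
      = ∏ i, ENNReal.ofReal (b i - a i) := by
  have h : {x : EuclideanSpace ℝ (Fin 2) | ∀ i, x i ∈ Set.Icc (a i) (b i)}
      = (MeasurableEquiv.toLp 2 (Fin 2 → ℝ)).symm ⁻¹' (Set.univ.pi fun i => Set.Icc (a i) (b i)) := by
    ext x
    simp only [Set.mem_preimage, Set.mem_pi, Set.mem_univ, forall_true_left, Set.mem_setOf_eq]
    rfl
  rw [h, (EuclideanSpace.volume_preserving_symm_measurableEquiv_toLp (Fin 2)).measure_preimage
    (MeasurableSet.univ_pi fun i => measurableSet_Icc).nullMeasurableSet,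
    volume_pi_pi]
  simp [Real.volume_Icc]

lemma measurableSet_box (a b : Fin 2 → ℝ) :
    MeasurableSet {x : EuclideanSpace ℝ (Fin 2) | ∀ i, x i ∈ Set.Icc (a i) (b i)} := by
  have h : {x : EuclideanSpace ℝ (Fin 2) | ∀ i, x i ∈ Set.Icc (a i) (b i)}
      = ⋂ i, (fun x : EuclideanSpace ℝ (Fin 2) => x i) ⁻¹' Set.Icc (a i) (b i) := by
    ext x; simp
  rw [h]
  exact MeasurableSet.iInter fun i =>
    ((measurable_pi_apply i).comp
      (MeasurableEquiv.toLp 2 (Fin 2 → ℝ)).symm.measurable) measurableSet_Icc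

lemma coord_abs_le_dist (x y : EuclideanSpace ℝ (Fin 2)) (i : Fin 2) :
    |x i - y i| ≤ dist x y := by
  rw [EuclideanSpace.dist_eq, ← Real.dist_eq]
  have h1 : dist (x i) (y i) ^ 2 ≤ ∑ j, dist (x j) (y j) ^ 2 :=
    Finset.single_le_sum (f := fun j => dist (x j) (y j) ^ 2)
      (fun j _ => sq_nonneg _) (Finset.mem_univ i)
  calc dist (x i) (y i) = Real.sqrt (dist (x i) (y i) ^ 2) := (Real.sqrt_sq dist_nonneg).symm
    _ ≤ _ := Real.sqrt_le_sqrt h1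

lemma volume_unitSquare : volume unitSquare = 1 := by
  have : unitSquare = {x : EuclideanSpace ℝ (Fin 2) |
      ∀ i, x i ∈ Set.Icc ((fun _ => (0:ℝ)) i) ((fun _ => (1:ℝ)) i)} := rfl
  rw [this, volume_box]; simp

lemma measurableSet_unitSquare : MeasurableSet unitSquare :=
  measurableSet_box (fun _ => 0) (fun _ => 1)

lemma volume_closedBall_le (z : EuclideanSpace ℝ (Fin 2)) (r : ℝ) (hr : 0 ≤ r) :
    volume (Metric.closedBall z r) ≤ ENNReal.ofReal ((2*r)^2) := by
  have hsub : Metric.closedBall z r ⊆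
      {x : EuclideanSpace ℝ (Fin 2) | ∀ i, x i ∈ Set.Icc (z i - r) (z i + r)} := by
    intro x hx i
    have := (coord_abs_le_dist x z i).trans (Metric.mem_closedBall.mp hx)
    rw [abs_le] at this
    exact ⟨by linarith [this.1], by linarith [this.2]⟩
  calc volume (Metric.closedBall z r) ≤ _ := measure_mono hsub
    _ = ∏ i : Fin 2, ENNReal.ofReal (z i + r - (z i - r)) := volume_box _ _
    _ = ENNReal.ofReal ((2*r)^2) := by
        rw [Fin.prod_univ_two]
        have h0 : z 0 + r - (z 0 - r) = 2*r := by ring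
        have h1 : z 1 + r - (z 1 - r) = 2*r := by ring
        rw [h0, h1, ← ENNReal.ofReal_mul (by linarith), sq]

lemma volume_ball_inter_ge (z : EuclideanSpace ℝ (Fin 2)) (hz : z ∈ unitSquare)
    (t : ℝ) (ht : 0 < t) (ht1 : t ≤ 1) :
    ENNReal.ofReal (t^2/4) ≤ volume (Metric.ball z t ∩ unitSquare) := by
  set u : Fin 2 → ℝ := fun i => if z i ≤ 1/2 then z i else z i - t/2 with hu
  have hbox : {x : EuclideanSpace ℝ (Fin 2) | ∀ i, x i ∈ Set.Icc (u i) (u i + t/2)}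
      ⊆ Metric.ball z t ∩ unitSquare := by
    intro x hx
    have hcoord : ∀ i, |x i - z i| ≤ t/2 := by
      intro i
      have h := hx i
      rw [abs_le]
      simp only [hu] at h
      split_ifs at h with hcase <;>
        [exact ⟨by linarith [h.1], by linarith [h.2]⟩;
         exact ⟨by linarith [h.1], by linarith [h.2]⟩]
    constructor
    · rw [Metric.mem_ball, EuclideanSpace.dist_eq]
      have hsum : (∑ i, dist (x i) (z i) ^ 2) ≤ t^2/2 := by
        rw [Fin.sum_univ_two]
        have h0 := hcoord 0; have h1 := hcoord 1
        rw [Real.dist_eq, Real.dist_eq]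
        nlinarith [abs_nonneg (x 0 - z 0), abs_nonneg (x 1 - z 1),
          sq_abs (x 0 - z 0), sq_abs (x 1 - z 1)]
      calc Real.sqrt (∑ i, dist (x i) (z i) ^ 2) ≤ Real.sqrt (t^2/2) := Real.sqrt_le_sqrt hsum
        _ < t := (Real.sqrt_lt' ht).mpr (by nlinarith)
    · intro i
      have h := hx i
      have hzi := hz i
      simp only [hu] at h
      split_ifs at h with hcase
      · exact ⟨by linarith [h.1, hzi.1], by linarith [h.2]⟩
      · exact ⟨by linarith [h.1], by linarith [h.2, hzi.2]⟩
  calc ENNReal.ofReal (t^2/4)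
      = ∏ i : Fin 2, ENNReal.ofReal (u i + t/2 - u i) := by
        rw [Fin.prod_univ_two]
        have he : ∀ i : Fin 2, u i + t/2 - u i = t/2 := fun i => by ring
        rw [he 0, he 1, ← ENNReal.ofReal_mul (by linarith)]
        ring_nf
    _ = _ := (volume_box _ _).symm
    _ ≤ _ := measure_mono hbox

/-! ### Deterministic Voronoi lemma -/

def sqCenter (c : EuclideanSpace ℝ (Fin 2)) (s : ℝ) : EuclideanSpace ℝ (Fin 2) :=
  WithLp.toLp 2 (fun i => c i + s / 2)

lemma sqCenter_mem {c : EuclideanSpace ℝ (Fin 2)} {s : ℝ} (hs : 0 ≤ s)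
    (h : axisSquare c s ⊆ unitSquare) : sqCenter c s ∈ unitSquare := by
  apply h
  intro i
  exact ⟨by simp [sqCenter]; linarith, by simp [sqCenter]; linarith⟩

lemma dist_sqCenter_le {x : EuclideanSpace ℝ (Fin 2)} {c : EuclideanSpace ℝ (Fin 2)} {s : ℝ}
    (hs : 0 ≤ s) (hx : x ∈ axisSquare c s) : dist x (sqCenter c s) ≤ s := by
  have hcoord : ∀ i, |x i - sqCenter c s i| ≤ s / 2 := by
    intro i
    have h := hx i
    rw [abs_le]
    exact ⟨by simp only [sqCenter, PiLp.toLp_apply]; linarith [h.1], by simp only [sqCenter, PiLp.toLp_apply]; linarith [h.2]⟩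
  rw [EuclideanSpace.dist_eq]
  have hsum : (∑ i, dist (x i) (sqCenter c s i) ^ 2) ≤ s ^ 2 := by
    rw [Fin.sum_univ_two, Real.dist_eq, Real.dist_eq]
    have h0 := hcoord 0; have h1 := hcoord 1
    nlinarith [abs_nonneg (x 0 - sqCenter c s 0), abs_nonneg (x 1 - sqCenter c s 1),
      sq_abs (x 0 - sqCenter c s 0), sq_abs (x 1 - sqCenter c s 1)]
  calc Real.sqrt (∑ i, dist (x i) (sqCenter c s i) ^ 2) ≤ Real.sqrt (s ^ 2) :=
        Real.sqrt_le_sqrt hsum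
    _ = s := Real.sqrt_sq hs

open Classical in
lemma dist_center_le {m : ℕ} (q : Fin m → EuclideanSpace ℝ (Fin 2))
    (c : EuclideanSpace ℝ (Fin 2)) {s : ℝ} (hs : 0 ≤ s)
    (H : (Finset.univ : Finset (Fin m)).Nonempty) (i : Fin m)
    (hne : (vorCell (Finset.image q Finset.univ) (q i) ∩ axisSquare c s).Nonempty) :
    dist (q i) (sqCenter c s)
      ≤ (Finset.univ.inf' H fun j => dist (q j) (sqCenter c s)) + 2 * s := by
  obtain ⟨x, hxv, hxs⟩ := hne
  obtain ⟨j0, -, hj0⟩ := Finset.exists_mem_eq_inf' H (fun j => dist (q j) (sqCenter c s))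
  have hxc : dist x (sqCenter c s) ≤ s := dist_sqCenter_le hs hxs
  have h1 : dist x (q i) ≤ dist x (q j0) :=
    hxv (q j0) (Finset.mem_image_of_mem q (Finset.mem_univ j0))
  calc dist (q i) (sqCenter c s) ≤ dist (q i) x + dist x (sqCenter c s) := dist_triangle _ _ _
    _ = dist x (q i) + dist x (sqCenter c s) := by rw [dist_comm]
    _ ≤ dist x (q j0) + dist x (sqCenter c s) := by linarith
    _ ≤ (dist x (sqCenter c s) + dist (sqCenter c s) (q j0)) + dist x (sqCenter c s) := by
        linarith [dist_triangle x (sqCenter c s) (q j0)]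
    _ = dist (q j0) (sqCenter c s) + 2 * dist x (sqCenter c s) := by
        rw [dist_comm (sqCenter c s)]; ring
    _ ≤ (Finset.univ.inf' H fun j => dist (q j) (sqCenter c s)) + 2 * s := by
        rw [hj0]; linarith

/-! ### Real-number estimates -/

lemma sum_inv_sq (n : ℕ) : ∑ k ∈ Finset.range n, (1:ℝ)/((k:ℝ)+1)^2 ≤ 2 - 2/((n:ℝ)+1) := by
  induction n with
  | zero => norm_num
  | succ n ih =>
      rw [Finset.sum_range_succ]
      have hn : (0:ℝ) < (n:ℝ) + 1 := by positivity
      have hn2 : (0:ℝ) < (n:ℝ) + 2 := by positivity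
      have key : (1:ℝ)/((n:ℝ)+1)^2 ≤ 2/((n:ℝ)+1) - 2/((n:ℝ)+2) := by
        rw [div_sub_div _ _ (ne_of_gt hn) (ne_of_gt hn2),
          div_le_div_iff₀ (by positivity) (by positivity)]
        nlinarith [hn]
      have hcast : ((n:ℝ)+1+1) = ((n:ℝ)+2) := by ring
      push_cast
      rw [hcast]
      linarith [key, ih]

lemma one_sub_pow_le_exp {a : ℝ} (h1 : a ≤ 1) (n : ℕ) :
    (1 - a) ^ n ≤ Real.exp (-(a * n)) := by
  have h : 1 - a ≤ Real.exp (-a) := by linarith [Real.add_one_le_exp (-a)]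
  calc (1 - a) ^ n ≤ Real.exp (-a) ^ n := pow_le_pow_left₀ (by linarith) h n
    _ = Real.exp (-(a * n)) := by rw [← Real.exp_nat_mul]; ring_nf

lemma exp_neg_le {x : ℝ} (hx : 0 < x) : Real.exp (-x) ≤ 256 / x ^ 4 := by
  have h1 : (x/4) ^ 4 ≤ Real.exp x := by
    have h2 : Real.exp x = Real.exp (x/4) ^ 4 := by
      rw [← Real.exp_nat_mul]; norm_num; ring_nf
    have h3 : x/4 ≤ Real.exp (x/4) := by linarith [Real.add_one_le_exp (x/4)]
    rw [h2]
    exact pow_le_pow_left₀ (by positivity) h3 4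
  have h4 : (0:ℝ) < (x/4)^4 := by positivity
  rw [Real.exp_neg]
  have h5 : (Real.exp x)⁻¹ ≤ ((x/4)^4)⁻¹ := inv_anti₀ h4 h1
  refine h5.trans_eq ?_
  rw [div_pow, inv_div]
  norm_num

lemma numeric_main {m : ℕ} (hm : 2 ≤ m) :
    (∑ k ∈ Finset.range (Nat.sqrt m + 1),
        4 * ((k:ℝ)+3)^2 * (1 - (k:ℝ)^2/(4*(m:ℝ)))^(m-1))
      + (m:ℝ) * (3/4:ℝ)^(m-1) ≤ 2^30 := by
  have hm0 : (0:ℝ) < (m:ℝ) := by positivity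
  have hmR2 : (2:ℝ) ≤ (m:ℝ) := by exact_mod_cast hm
  have hm1 : (1:ℝ) ≤ ((m:ℝ) - 1) := by linarith
  have hterm : ∀ k ∈ Finset.range (Nat.sqrt m + 1),
      4 * ((k:ℝ)+3)^2 * (1 - (k:ℝ)^2/(4*(m:ℝ)))^(m-1) ≤ 2^28 * (1/((k:ℝ)+1)^2) := by
    intro k hk
    have hk' : k ≤ Nat.sqrt m := by
      simpa [Nat.lt_succ_iff] using Finset.mem_range.mp hk
    have hksq : (k:ℝ)^2 ≤ (m:ℝ) := by
      have h2 : k^2 ≤ m := le_trans (Nat.pow_le_pow_left hk' 2)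
        (by nlinarith [Nat.sqrt_le' m, Nat.sqrt_le m])
      exact_mod_cast h2
    rcases Nat.eq_zero_or_pos k with rfl | hkpos
    · norm_num
    have hkR : (1:ℝ) ≤ (k:ℝ) := by exact_mod_cast hkpos
    set a : ℝ := (k:ℝ)^2/(4*(m:ℝ)) with ha
    have ha1 : a ≤ 1 := by
      rw [ha, div_le_one (by positivity)]; linarith
    have hexp : (1 - a)^(m-1) ≤ Real.exp (-((k:ℝ)^2/8)) := by
      refine (one_sub_pow_le_exp ha1 (m-1)).trans ?_
      apply Real.exp_le_exp.mpr
      have hcast : ((m-1 : ℕ) : ℝ) = (m:ℝ) - 1 := by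
        have h1 : (1:ℕ) ≤ m := by omega
        push_cast [h1]; ring
      rw [hcast, ha, neg_le_neg_iff, div_mul_eq_mul_div, le_div_iff₀ (by positivity)]
      nlinarith [sq_nonneg (k:ℝ)]
    have hexp2 : Real.exp (-((k:ℝ)^2/8)) ≤ 2^20/(k:ℝ)^8 := by
      refine (exp_neg_le (by positivity)).trans_eq ?_
      have hk8 : ((k:ℝ)^2/8)^4 = (k:ℝ)^8/4096 := by ring
      rw [hk8]
      have hkpos8 : ((k:ℝ))^8 ≠ 0 := by positivity
      field_simp
      ring
    have hfinal : 4 * ((k:ℝ)+3)^2 * (2^20/(k:ℝ)^8) ≤ 2^28 * (1/((k:ℝ)+1)^2) := by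
      have heq : 4 * ((k:ℝ)+3)^2 * (2^20/(k:ℝ)^8) = (2^22*((k:ℝ)+3)^2)/(k:ℝ)^8 := by ring
      rw [heq, mul_one_div, div_le_div_iff₀ (by positivity) (by positivity)]
      have h3 : ((k:ℝ)+3)^2 ≤ (4*(k:ℝ))^2 :=
        pow_le_pow_left₀ (by linarith) (by linarith) 2
      have h4 : ((k:ℝ)+1)^2 ≤ (2*(k:ℝ))^2 :=
        pow_le_pow_left₀ (by linarith) (by linarith) 2
      have hAB : ((k:ℝ)+3)^2*((k:ℝ)+1)^2 ≤ 64*(k:ℝ)^4 := by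
        nlinarith [sq_nonneg ((k:ℝ)+3), sq_nonneg ((k:ℝ)+1), sq_nonneg (k:ℝ)]
      have h8 : (k:ℝ)^4 ≤ (k:ℝ)^8 := by
        nlinarith [pow_le_pow_right₀ hkR (by norm_num : 4 ≤ 8)]
      nlinarith [hAB, h8]
    have hpownn : (0:ℝ) ≤ 4 * ((k:ℝ)+3)^2 := by positivity
    calc 4 * ((k:ℝ)+3)^2 * (1 - a)^(m-1)
        ≤ 4 * ((k:ℝ)+3)^2 * (2^20/(k:ℝ)^8) :=
          mul_le_mul_of_nonneg_left (hexp.trans hexp2) hpownn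
      _ ≤ 2^28 * (1/((k:ℝ)+1)^2) := hfinal
  have hsum : (∑ k ∈ Finset.range (Nat.sqrt m + 1),
      4 * ((k:ℝ)+3)^2 * (1 - (k:ℝ)^2/(4*(m:ℝ)))^(m-1)) ≤ 2^29 := by
    calc _ ≤ ∑ k ∈ Finset.range (Nat.sqrt m + 1), 2^28 * (1/((k:ℝ)+1)^2) :=
          Finset.sum_le_sum hterm
      _ = 2^28 * ∑ k ∈ Finset.range (Nat.sqrt m + 1), (1/((k:ℝ)+1)^2) := by
          rw [Finset.mul_sum]
      _ ≤ 2^28 * 2 := by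
          have h1 := sum_inv_sq (Nat.sqrt m + 1)
          have h3 : (2:ℝ)/(((Nat.sqrt m + 1 : ℕ):ℝ)+1) ≥ 0 := by positivity
          nlinarith
      _ = 2^29 := by norm_num
  have htail : (m:ℝ) * (3/4:ℝ)^(m-1) ≤ 2^17 := by
    have h34 : (3/4:ℝ) = 1 - 1/4 := by norm_num
    have hcast : ((m-1 : ℕ) : ℝ) = (m:ℝ) - 1 := by
      have h1 : (1:ℕ) ≤ m := by omega
      push_cast [h1]; ring
    have hexp : (3/4:ℝ)^(m-1) ≤ Real.exp (-(((m:ℝ)-1)/4)) := by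
      rw [h34]
      refine (one_sub_pow_le_exp (by norm_num) (m-1)).trans ?_
      apply Real.exp_le_exp.mpr
      rw [hcast]; ring_nf; linarith
    have hexp2 : Real.exp (-(((m:ℝ)-1)/4)) ≤ 256/((((m:ℝ)-1)/4)^4) :=
      exp_neg_le (by linarith)
    have h5 : 256/((((m:ℝ)-1)/4)^4) = 2^16/((m:ℝ)-1)^4 := by
      have heq : (((m:ℝ)-1)/4)^4 = ((m:ℝ)-1)^4/256 := by ring
      rw [heq]
      have hpos : ((m:ℝ)-1)^4 ≠ 0 := by positivity
      field_simp
      ring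
    have hmono : (m:ℝ) * (2^16/((m:ℝ)-1)^4) ≤ 2^17 := by
      rw [mul_div_assoc', div_le_iff₀ (by positivity)]
      have h6 : ((m:ℝ)-1) ≤ ((m:ℝ)-1)^4 := by
        nlinarith [sq_nonneg ((m:ℝ)-1), sq_nonneg (((m:ℝ)-1)^2 - 1), sq_nonneg (((m:ℝ)-1) - 1)]
      nlinarith
    calc (m:ℝ) * (3/4:ℝ)^(m-1) ≤ (m:ℝ) * (2^16/((m:ℝ)-1)^4) :=
          mul_le_mul_of_nonneg_left ((hexp.trans hexp2).trans_eq h5) (by positivity)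
      _ ≤ 2^17 := hmono
  calc _ ≤ (2:ℝ)^29 + 2^17 := add_le_add hsum htail
    _ ≤ 2^30 := by norm_num

lemma numeric_all {m : ℕ} (hm : 1 ≤ m) :
    (∑ k ∈ Finset.range (Nat.sqrt m + 1),
        4 * ((k:ℝ)+3)^2 * (1 - (k:ℝ)^2/(4*(m:ℝ)))^(m-1))
      + (m:ℝ) * (3/4:ℝ)^(m-1) ≤ 2^30 := by
  rcases eq_or_lt_of_le hm with h1 | h2
  · rw [← h1]
    norm_num [Finset.sum_range_succ]
  · exact numeric_main h2

/-! ### Independence product lemma -/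

open Classical in
lemma indep_prod_eq {Ω : Type} [MeasurableSpace Ω] {μ : Measure Ω} {m : ℕ}
    {p : Fin m → Ω → EuclideanSpace ℝ (Fin 2)} (hp : ∀ i, Measurable (p i))
    (hindep : iIndepFun p μ)
    (hlaw : ∀ i, Measure.map (p i) μ = volume.restrict unitSquare)
    (i : Fin m) {D1 D2 : Set (EuclideanSpace ℝ (Fin 2))}
    (hD1 : MeasurableSet D1) (hD2 : MeasurableSet D2) :
    μ (p i ⁻¹' D1 ∩ ⋂ j ∈ Finset.univ.erase i, p j ⁻¹' D2)
      = (volume.restrict unitSquare) D1 * ((volume.restrict unitSquare) D2) ^ (m - 1) := by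
  have hmap : ∀ (j : Fin m) (D : Set (EuclideanSpace ℝ (Fin 2))), MeasurableSet D →
      μ (p j ⁻¹' D) = (volume.restrict unitSquare) D := by
    intro j D hD
    rw [← hlaw j, Measure.map_apply (hp j) hD]
  set sets : Fin m → Set (EuclideanSpace ℝ (Fin 2)) := fun j => if j = i then D1 else D2
    with hsets
  have hseteq : p i ⁻¹' D1 ∩ ⋂ j ∈ Finset.univ.erase i, p j ⁻¹' D2
      = ⋂ j ∈ Finset.univ, p j ⁻¹' sets j := by
    ext ω
    simp only [Set.mem_inter_iff, Set.mem_iInter, Set.mem_preimage, Finset.mem_univ,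
      Finset.mem_erase, true_and, forall_true_left, hsets]
    constructor
    · rintro ⟨h1, h2⟩ j
      by_cases hji : j = i
      · subst hji; simpa using h1
      · simpa [hji] using h2 j ⟨hji, trivial⟩
    · intro h
      refine ⟨by simpa using h i, fun j hji => by simpa [hji.1] using h j⟩
  rw [hseteq, hindep.measure_inter_preimage_eq_mul Finset.univ
    (fun j _ => by by_cases hji : j = i <;> simp [hsets, hji, hD1, hD2]),
    ← Finset.mul_prod_erase Finset.univ _ (Finset.mem_univ i)]
  congr 1
  · rw [hmap i _ (by simp [hsets, hD1])]
    simp [hsets]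
  · calc ∏ j ∈ Finset.univ.erase i, μ (p j ⁻¹' sets j)
        = ∏ _j ∈ Finset.univ.erase i, (volume.restrict unitSquare) D2 := by
          refine Finset.prod_congr rfl fun j hj => ?_
          have hji : j ≠ i := Finset.ne_of_mem_erase hj
          rw [show sets j = D2 by simp [hsets, hji], hmap j _ hD2]
      _ = ((volume.restrict unitSquare) D2) ^ (m - 1) := by
          rw [Finset.prod_const, Finset.card_erase_of_mem (Finset.mem_univ i),
            Finset.card_univ, Fintype.card_fin]

open Classical in
lemma indep_prod_eq1 {Ω : Type} [MeasurableSpace Ω] {μ : Measure Ω} {m : ℕ}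
    [IsProbabilityMeasure μ]
    {p : Fin m → Ω → EuclideanSpace ℝ (Fin 2)} (hp : ∀ i, Measurable (p i))
    (hindep : iIndepFun p μ)
    (hlaw : ∀ i, Measure.map (p i) μ = volume.restrict unitSquare)
    (i : Fin m) {D2 : Set (EuclideanSpace ℝ (Fin 2))} (hD2 : MeasurableSet D2) :
    μ (⋂ j ∈ Finset.univ.erase i, p j ⁻¹' D2)
      = ((volume.restrict unitSquare) D2) ^ (m - 1) := by
  have hmap : ∀ (j : Fin m), μ (p j ⁻¹' D2) = (volume.restrict unitSquare) D2 := by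
    intro j
    rw [← hlaw j, Measure.map_apply (hp j) hD2]
  rw [hindep.measure_inter_preimage_eq_mul (sets := fun _ => D2) (Finset.univ.erase i)
    (fun j _ => hD2)]
  calc ∏ j ∈ Finset.univ.erase i, μ (p j ⁻¹' D2)
      = ∏ _j ∈ Finset.univ.erase i, (volume.restrict unitSquare) D2 :=
        Finset.prod_congr rfl fun j _ => hmap j
    _ = ((volume.restrict unitSquare) D2) ^ (m - 1) := by
        rw [Finset.prod_const, Finset.card_erase_of_mem (Finset.mem_univ i),
          Finset.card_univ, Fintype.card_fin]

open Classical in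
theorem expected_cells_meeting_square :
    ∃ C : ℝ, 0 < C ∧
      ∀ (m : ℕ), 1 ≤ m →
      ∀ (Ω : Type) (_ : MeasurableSpace Ω) (μ : Measure Ω), IsProbabilityMeasure μ →
      ∀ (p : Fin m → Ω → EuclideanSpace ℝ (Fin 2)),
        (∀ i, Measurable (p i)) →
        iIndepFun p μ →
        (∀ i, Measure.map (p i) μ = volume.restrict unitSquare) →
      ∀ c : EuclideanSpace ℝ (Fin 2),
        axisSquare c (1 / Real.sqrt m) ⊆ unitSquare →
        ∫⁻ ω, ((Finset.univ.filter (fun i : Fin m =>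
            (vorCell (Finset.image (fun j => p j ω) Finset.univ) (p i ω) ∩
              axisSquare c (1 / Real.sqrt m)).Nonempty)).card : ℝ≥0∞) ∂μ
          ≤ ENNReal.ofReal C := by
  classical
  refine ⟨2^30, by norm_num, ?_⟩
  intro m hm Ω _inst μ hμ p hp hindep hlaw c hsubQ
  classical
  have hm0 : (0:ℝ) < (m:ℝ) := by exact_mod_cast hm
  set s : ℝ := 1 / Real.sqrt m with hs_def
  have hsqrt : 0 < Real.sqrt m := Real.sqrt_pos.mpr hm0
  have hs0 : 0 < s := by rw [hs_def]; positivity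
  have hs2 : (m:ℝ) * s^2 = 1 := by
    rw [hs_def, div_pow, one_pow, Real.sq_sqrt hm0.le]
    field_simp
  set z : EuclideanSpace ℝ (Fin 2) := sqCenter c s with hz_def
  have hz : z ∈ unitSquare := sqCenter_mem hs0.le hsubQ
  haveI : Nonempty (Fin m) := ⟨⟨0, hm⟩⟩
  have Huniv : (Finset.univ : Finset (Fin m)).Nonempty := Finset.univ_nonempty
  set ν := volume.restrict unitSquare with hν_def
  have hν_univ : ν Set.univ = 1 := by
    rw [hν_def, Measure.restrict_apply MeasurableSet.univ, Set.univ_inter, volume_unitSquare]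
  have hν_le_one : ∀ D : Set (EuclideanSpace ℝ (Fin 2)), ν D ≤ 1 :=
    fun D => (measure_mono (Set.subset_univ D)).trans_eq hν_univ
  -- the dominating events
  set E : Fin m → Set Ω := fun i =>
    {ω | dist (p i ω) z ≤ (Finset.univ.inf' Huniv fun j => dist (p j ω) z) + 2*s}
    with hE_def
  have hEeq : ∀ i, E i = ⋂ j, {ω | dist (p i ω) z ≤ dist (p j ω) z + 2*s} := by
    intro i; ext ω
    simp only [hE_def, Set.mem_setOf_eq, Set.mem_iInter]
    constructor
    · intro h j
      have h2 : (Finset.univ.inf' Huniv fun j => dist (p j ω) z) ≤ dist (p j ω) z :=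
        Finset.inf'_le _ (Finset.mem_univ j)
      linarith
    · intro h
      rw [← sub_le_iff_le_add, Finset.le_inf'_iff]
      intro j _
      rw [sub_le_iff_le_add]
      exact h j
  have hEmeas : ∀ i, MeasurableSet (E i) := by
    intro i
    rw [hEeq i]
    exact MeasurableSet.iInter fun j => measurableSet_le
      ((hp i).dist measurable_const) (((hp j).dist measurable_const).add_const _)
  -- pointwise bound on the count
  have hpoint : ∀ ω, ((Finset.univ.filter (fun i : Fin m =>
        (vorCell (Finset.image (fun j => p j ω) Finset.univ) (p i ω) ∩
          axisSquare c (1 / Real.sqrt m)).Nonempty)).card : ℝ≥0∞)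
      ≤ ∑ i, (E i).indicator (fun _ => (1:ℝ≥0∞)) ω := by
    intro ω
    have hsub : (Finset.univ.filter (fun i : Fin m =>
        (vorCell (Finset.image (fun j => p j ω) Finset.univ) (p i ω) ∩
          axisSquare c (1 / Real.sqrt m)).Nonempty))
        ⊆ Finset.univ.filter (fun i => ω ∈ E i) := by
      refine Finset.monotone_filter_right _ ?_
      intro i _ hi
      have := dist_center_le (fun j => p j ω) c hs0.le Huniv i hi
      simpa [hE_def] using this
    calc ((Finset.univ.filter _).card : ℝ≥0∞)
        ≤ ((Finset.univ.filter (fun i => ω ∈ E i)).card : ℝ≥0∞) :=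
          Nat.cast_le.mpr (Finset.card_le_card hsub)
      _ = ∑ i, (E i).indicator (fun _ => (1:ℝ≥0∞)) ω := by
          rw [Finset.card_filter]
          push_cast
          refine Finset.sum_congr rfl fun i _ => ?_
          by_cases h : ω ∈ E i <;> simp [Set.indicator_apply, h]
  -- the key probability estimate
  have hkey : ∀ i : Fin m, μ (E i) ≤ ENNReal.ofReal
      ((∑ k ∈ Finset.range (Nat.sqrt m + 1),
          4*((k:ℝ)+3)^2*s^2*(1 - (k:ℝ)^2/(4*(m:ℝ)))^(m-1))
        + (3/4:ℝ)^(m-1)) := by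
    intro i
    haveI := hμ
    set K := Nat.sqrt m + 1 with hK_def
    set Bs : ℝ → Set (EuclideanSpace ℝ (Fin 2)) := fun t => (Metric.ball z t)ᶜ with hBs_def
    set A : ℕ → Set Ω := fun k => p i ⁻¹' (Metric.closedBall z (((k:ℝ)+3)*s)) with hA_def
    set B : ℕ → Set Ω := fun k => ⋂ j ∈ Finset.univ.erase i, p j ⁻¹' Bs ((k:ℝ)*s) with hB_def
    set B1 : Set Ω := ⋂ j ∈ Finset.univ.erase i, p j ⁻¹' Bs 1 with hB1_def
    have hsubE : E i ⊆ (⋃ k ∈ Finset.range K, (A k ∩ B k)) ∪ B1 := by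
      intro ω hω
      have hωE : dist (p i ω) z
          ≤ (Finset.univ.inf' Huniv fun j => dist (p j ω) z) + 2*s := hω
      by_cases hcase : ∀ j ∈ Finset.univ.erase i, (1:ℝ) ≤ dist (p j ω) z
      · right
        simp only [hB1_def]
        refine Set.mem_iInter₂.mpr fun j hj => ?_
        simp only [hBs_def, Set.mem_preimage, Set.mem_compl_iff, Metric.mem_ball, not_lt]
        exact hcase j hj
      · left
        push_neg at hcase
        obtain ⟨j0, hj0mem, hj0lt⟩ := hcase
        have hne : (Finset.univ.erase i).Nonempty := ⟨j0, hj0mem⟩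
        set d := (Finset.univ.erase i).inf' hne (fun j => dist (p j ω) z) with hd_def
        have hd_le : d ≤ dist (p j0 ω) z := Finset.inf'_le _ hj0mem
        have hd_lt1 : d < 1 := lt_of_le_of_lt hd_le hj0lt
        have hd0 : 0 ≤ d := by
          obtain ⟨j1, hj1, hdj1⟩ := Finset.exists_mem_eq_inf' hne (fun j => dist (p j ω) z)
          rw [hd_def, hdj1]; exact dist_nonneg
        set k := Nat.floor (d/s) with hk_def
        have hfl : (k:ℝ) ≤ d/s := Nat.floor_le (div_nonneg hd0 hs0.le)
        have hks : (k:ℝ)*s ≤ d := by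
          calc (k:ℝ)*s ≤ (d/s)*s := mul_le_mul_of_nonneg_right hfl hs0.le
            _ = d := div_mul_cancel₀ _ (ne_of_gt hs0)
        have hdk1 : d < ((k:ℝ)+1)*s := by
          have h2 : d/s < (k:ℝ)+1 := Nat.lt_floor_add_one (d/s)
          calc d = (d/s)*s := (div_mul_cancel₀ _ (ne_of_gt hs0)).symm
            _ < ((k:ℝ)+1)*s := mul_lt_mul_of_pos_right h2 hs0
        have hkK : k ∈ Finset.range K := by
          have h2 : d/s = d * Real.sqrt m := by
            rw [hs_def]; field_simp
          have h3 : (k:ℝ) < Real.sqrt m := by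
            rw [h2] at hfl
            calc (k:ℝ) ≤ d * Real.sqrt m := hfl
              _ < 1 * Real.sqrt m := mul_lt_mul_of_pos_right hd_lt1 hsqrt
              _ = Real.sqrt m := one_mul _
          have h4 : (k:ℝ)*(k:ℝ) < (m:ℝ) := by
            nlinarith [Real.sq_sqrt hm0.le, Nat.cast_nonneg (α := ℝ) k]
          have h5 : k*k < m := by exact_mod_cast h4
          have h6 : k ≤ Nat.sqrt m := Nat.le_sqrt.mpr h5.le
          exact Finset.mem_range.mpr (Nat.lt_succ_of_le h6)
        refine Set.mem_iUnion₂.mpr ⟨k, hkK, ?_, ?_⟩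
        · have hinf_le_d : (Finset.univ.inf' Huniv fun j => dist (p j ω) z) ≤ d := by
            obtain ⟨j1, hj1, hdj1⟩ := Finset.exists_mem_eq_inf' hne (fun j => dist (p j ω) z)
            rw [hd_def, hdj1]
            exact Finset.inf'_le _ (Finset.mem_univ j1)
          simp only [hA_def, Set.mem_preimage, Metric.mem_closedBall]
          calc dist (p i ω) z ≤ d + 2*s := le_trans hωE (by linarith)
            _ ≤ ((k:ℝ)+1)*s + 2*s := by linarith
            _ = ((k:ℝ)+3)*s := by ring
        · simp only [hB_def]
          refine Set.mem_iInter₂.mpr fun j hj => ?_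
          simp only [hBs_def, Set.mem_preimage, Set.mem_compl_iff, Metric.mem_ball, not_lt]
          exact le_trans hks (Finset.inf'_le _ hj)
    have hmle : μ (E i) ≤ ∑ k ∈ Finset.range K, μ (A k ∩ B k) + μ B1 := by
      calc μ (E i) ≤ μ ((⋃ k ∈ Finset.range K, (A k ∩ B k)) ∪ B1) := measure_mono hsubE
        _ ≤ μ (⋃ k ∈ Finset.range K, (A k ∩ B k)) + μ B1 := measure_union_le _ _
        _ ≤ (∑ k ∈ Finset.range K, μ (A k ∩ B k)) + μ B1 :=
            add_le_add_left (measure_biUnion_finset_le _ _) _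
    have hprod : ∀ k : ℕ, μ (A k ∩ B k)
        = ν (Metric.closedBall z (((k:ℝ)+3)*s)) * (ν (Bs ((k:ℝ)*s))) ^ (m-1) := by
      intro k
      simp only [hA_def, hB_def, hBs_def, hν_def]
      exact indep_prod_eq hp hindep hlaw i measurableSet_closedBall
        measurableSet_ball.compl
    have hprod1 : μ B1 = (ν (Bs 1)) ^ (m-1) := by
      simp only [hB1_def, hBs_def, hν_def]
      exact indep_prod_eq1 hp hindep hlaw i measurableSet_ball.compl
    have hν_ball_compl : ∀ t : ℝ, 0 < t → t ≤ 1 →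
        ν (Bs t) ≤ ENNReal.ofReal (1 - t^2/4) := by
      intro t ht0 ht1
      have hb : ENNReal.ofReal (t^2/4) ≤ ν (Metric.ball z t) := by
        rw [hν_def, Measure.restrict_apply measurableSet_ball]
        exact volume_ball_inter_ge z hz t ht0 ht1
      have hcompl : ν (Bs t) = ν Set.univ - ν (Metric.ball z t) := by
        simp only [hBs_def]
        exact measure_compl measurableSet_ball
          ((hν_le_one _).trans_lt ENNReal.one_lt_top).ne
      rw [hcompl, hν_univ]
      calc 1 - ν (Metric.ball z t) ≤ 1 - ENNReal.ofReal (t^2/4) := tsub_le_tsub_left hb 1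
        _ = ENNReal.ofReal (1 - t^2/4) := by
            rw [← ENNReal.ofReal_one,
              ← ENNReal.ofReal_sub _ (by positivity : (0:ℝ) ≤ t^2/4)]
    have hnnk : ∀ k, k ∈ Finset.range K → (0:ℝ) ≤ 1 - (k:ℝ)^2/(4*(m:ℝ)) := by
      intro k hk
      have hk' : k ≤ Nat.sqrt m := by
        simpa [hK_def, Nat.lt_succ_iff] using Finset.mem_range.mp hk
      have h2 : k*k ≤ m := le_trans (Nat.mul_le_mul hk' hk') (by have h := Nat.sqrt_le' m; rwa [pow_two] at h)
      have hkm : (k:ℝ)^2 ≤ (m:ℝ) := by rw [sq]; exact_mod_cast h2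
      rw [sub_nonneg, div_le_one (by positivity)]
      linarith
    have hnn : ∀ k ∈ Finset.range K,
        (0:ℝ) ≤ 4*((k:ℝ)+3)^2*s^2*(1 - (k:ℝ)^2/(4*(m:ℝ)))^(m-1) := by
      intro k hk
      exact mul_nonneg (by positivity) (pow_nonneg (hnnk k hk) _)
    have hbound_k : ∀ k ∈ Finset.range K, μ (A k ∩ B k) ≤
        ENNReal.ofReal (4*((k:ℝ)+3)^2*s^2*(1 - (k:ℝ)^2/(4*(m:ℝ)))^(m-1)) := by
      intro k hk
      have hk' : k ≤ Nat.sqrt m := by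
        simpa [hK_def, Nat.lt_succ_iff] using Finset.mem_range.mp hk
      have h2 : k*k ≤ m := le_trans (Nat.mul_le_mul hk' hk') (by have h := Nat.sqrt_le' m; rwa [pow_two] at h)
      have hkm : (k:ℝ)^2 ≤ (m:ℝ) := by rw [sq]; exact_mod_cast h2
      have hbase : ν (Bs ((k:ℝ)*s)) ≤ ENNReal.ofReal (1 - (k:ℝ)^2/(4*(m:ℝ))) := by
        rcases Nat.eq_zero_or_pos k with rfl | hkpos
        · calc ν (Bs ((0:ℕ)*s)) ≤ 1 := hν_le_one _
            _ = ENNReal.ofReal (1 - ((0:ℕ):ℝ)^2/(4*(m:ℝ))) := by norm_num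
        · have ht0 : 0 < (k:ℝ)*s := by
            have : (0:ℝ) < (k:ℝ) := by exact_mod_cast hkpos
            positivity
          have ht1 : (k:ℝ)*s ≤ 1 := by
            have h3 : (k:ℝ) ≤ Real.sqrt m := by
              rw [show (k:ℝ) = Real.sqrt ((k:ℝ)^2) by rw [Real.sqrt_sq (Nat.cast_nonneg k)]]
              exact Real.sqrt_le_sqrt hkm
            rw [hs_def, mul_one_div, div_le_one hsqrt]
            exact h3
          have heq : 1 - ((k:ℝ)*s)^2/4 = 1 - (k:ℝ)^2/(4*(m:ℝ)) := by
            have hm_ne : (m:ℝ) ≠ 0 := ne_of_gt hm0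
            have hs2' : s^2 = 1/(m:ℝ) := by
              field_simp at hs2 ⊢
              linarith [hs2]
            rw [mul_pow, hs2']
            field_simp
          calc ν (Bs ((k:ℝ)*s)) ≤ ENNReal.ofReal (1 - ((k:ℝ)*s)^2/4) :=
                hν_ball_compl _ ht0 ht1
            _ = ENNReal.ofReal (1 - (k:ℝ)^2/(4*(m:ℝ))) := by rw [heq]
      have hterm2 : (ν (Bs ((k:ℝ)*s))) ^ (m-1)
          ≤ ENNReal.ofReal ((1 - (k:ℝ)^2/(4*(m:ℝ)))^(m-1)) := by
        calc (ν (Bs ((k:ℝ)*s))) ^ (m-1)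
            ≤ (ENNReal.ofReal (1 - (k:ℝ)^2/(4*(m:ℝ))))^(m-1) := pow_le_pow_left' hbase _
          _ = ENNReal.ofReal ((1 - (k:ℝ)^2/(4*(m:ℝ)))^(m-1)) :=
              (ENNReal.ofReal_pow (hnnk k hk) _).symm
      have hterm1 : ν (Metric.closedBall z (((k:ℝ)+3)*s))
          ≤ ENNReal.ofReal (4*((k:ℝ)+3)^2*s^2) := by
        calc ν (Metric.closedBall z (((k:ℝ)+3)*s))
            ≤ volume (Metric.closedBall z (((k:ℝ)+3)*s)) := by
              rw [hν_def, Measure.restrict_apply measurableSet_closedBall]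
              exact measure_mono Set.inter_subset_left
          _ ≤ ENNReal.ofReal ((2*(((k:ℝ)+3)*s))^2) :=
              volume_closedBall_le _ _ (by positivity)
          _ = ENNReal.ofReal (4*((k:ℝ)+3)^2*s^2) := by
              rw [show (2*(((k:ℝ)+3)*s))^2 = 4*((k:ℝ)+3)^2*s^2 by ring]
      calc μ (A k ∩ B k) = _ := hprod k
        _ ≤ ENNReal.ofReal (4*((k:ℝ)+3)^2*s^2)
              * ENNReal.ofReal ((1 - (k:ℝ)^2/(4*(m:ℝ)))^(m-1)) :=
            mul_le_mul' hterm1 hterm2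
        _ = ENNReal.ofReal (4*((k:ℝ)+3)^2*s^2*(1 - (k:ℝ)^2/(4*(m:ℝ)))^(m-1)) := by
            rw [← ENNReal.ofReal_mul (by positivity)]
    have hbound1 : μ B1 ≤ ENNReal.ofReal ((3/4:ℝ)^(m-1)) := by
      rw [hprod1]
      have hb : ν (Bs 1) ≤ ENNReal.ofReal (3/4) := by
        have h1 := hν_ball_compl 1 one_pos le_rfl
        norm_num at h1
        exact h1
      calc (ν (Bs 1))^(m-1) ≤ (ENNReal.ofReal (3/4))^(m-1) := pow_le_pow_left' hb _
        _ = ENNReal.ofReal ((3/4:ℝ)^(m-1)) := (ENNReal.ofReal_pow (by norm_num) _).symm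
    calc μ (E i) ≤ ∑ k ∈ Finset.range K, μ (A k ∩ B k) + μ B1 := hmle
      _ ≤ (∑ k ∈ Finset.range K,
            ENNReal.ofReal (4*((k:ℝ)+3)^2*s^2*(1 - (k:ℝ)^2/(4*(m:ℝ)))^(m-1)))
          + ENNReal.ofReal ((3/4:ℝ)^(m-1)) :=
          add_le_add (Finset.sum_le_sum hbound_k) hbound1
      _ = ENNReal.ofReal ((∑ k ∈ Finset.range K,
            4*((k:ℝ)+3)^2*s^2*(1 - (k:ℝ)^2/(4*(m:ℝ)))^(m-1)) + (3/4:ℝ)^(m-1)) := by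
          rw [← ENNReal.ofReal_sum_of_nonneg hnn,
            ← ENNReal.ofReal_add (Finset.sum_nonneg hnn) (by positivity)]

  -- put everything together
  calc ∫⁻ ω, ((Finset.univ.filter (fun i : Fin m =>
        (vorCell (Finset.image (fun j => p j ω) Finset.univ) (p i ω) ∩
          axisSquare c (1 / Real.sqrt m)).Nonempty)).card : ℝ≥0∞) ∂μ
      ≤ ∫⁻ ω, ∑ i, (E i).indicator (fun _ => (1:ℝ≥0∞)) ω ∂μ := lintegral_mono hpoint
    _ = ∑ i, ∫⁻ ω, (E i).indicator (fun _ => (1:ℝ≥0∞)) ω ∂μ :=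
        lintegral_finset_sum _ (fun i _ => measurable_const.indicator (hEmeas i))
    _ = ∑ i : Fin m, μ (E i) := by
        refine Finset.sum_congr rfl fun i _ => ?_
        rw [lintegral_indicator (hEmeas i)]
        simp
    _ ≤ ∑ _i : Fin m, ENNReal.ofReal
          ((∑ k ∈ Finset.range (Nat.sqrt m + 1),
              4*((k:ℝ)+3)^2*s^2*(1 - (k:ℝ)^2/(4*(m:ℝ)))^(m-1))
            + (3/4:ℝ)^(m-1)) := Finset.sum_le_sum fun i _ => hkey i
    _ = (m : ℝ≥0∞) * ENNReal.ofReal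
          ((∑ k ∈ Finset.range (Nat.sqrt m + 1),
              4*((k:ℝ)+3)^2*s^2*(1 - (k:ℝ)^2/(4*(m:ℝ)))^(m-1))
            + (3/4:ℝ)^(m-1)) := by
        rw [Finset.sum_const, Finset.card_univ, Fintype.card_fin, nsmul_eq_mul]
    _ = ENNReal.ofReal ((m:ℝ) *
          ((∑ k ∈ Finset.range (Nat.sqrt m + 1),
              4*((k:ℝ)+3)^2*s^2*(1 - (k:ℝ)^2/(4*(m:ℝ)))^(m-1))
            + (3/4:ℝ)^(m-1))) := by
        rw [← ENNReal.ofReal_natCast m, ← ENNReal.ofReal_mul (Nat.cast_nonneg m)]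
    _ ≤ ENNReal.ofReal (2^30) := by
        apply ENNReal.ofReal_le_ofReal
        have hrw : (m:ℝ) * ((∑ k ∈ Finset.range (Nat.sqrt m + 1),
              4*((k:ℝ)+3)^2*s^2*(1 - (k:ℝ)^2/(4*(m:ℝ)))^(m-1)) + (3/4:ℝ)^(m-1))
            = (∑ k ∈ Finset.range (Nat.sqrt m + 1),
              4*((k:ℝ)+3)^2*(1 - (k:ℝ)^2/(4*(m:ℝ)))^(m-1)) + (m:ℝ)*(3/4:ℝ)^(m-1) := by
          rw [mul_add, Finset.mul_sum]
          congr 1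
          refine Finset.sum_congr rfl fun k _ => ?_
          calc (m:ℝ) * (4*((k:ℝ)+3)^2*s^2*(1 - (k:ℝ)^2/(4*(m:ℝ)))^(m-1))
              = 4*((k:ℝ)+3)^2*(1 - (k:ℝ)^2/(4*(m:ℝ)))^(m-1) * ((m:ℝ)*s^2) := by ring
            _ = 4*((k:ℝ)+3)^2*(1 - (k:ℝ)^2/(4*(m:ℝ)))^(m-1) := by rw [hs2, mul_one]
        rw [hrw]
        exact numeric_all hm


end
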